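/- In the setting of Example of the K_{3,3}-type configuration: let α_i = (i−5, 1) ∈ Q² for i = 1,…,9, and T₀ = {123, 456, 789, 147, 258, 369}. Then the six linear forms α_S on Q⁹ (normals of D_S for S ∈ T₀, each given by the Laplace expansion α_{abc} = Δ_{bc}e_a* − Δ_{ac}e_b* + Δ_{ab}e_c*) span a subspace of dimension exactly 5; hence rank ⋂_{S∈T₀} D_S = 5 < 6 = ν(T₀). -/

import Mathlib

/-- The normals `α_i = (i−5, 1) ∈ ℚ²`, `i = 1,…,9` (zero-based: `α i = (i−4, 1)`). -/
def kAlpha (i : Fin 9) : Fin 2 → ℚ := ![(i : ℚ) - 4, 1]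

/-- `Δ_{ij} = det(α_i, α_j)`. -/
def kDelta (i j : Fin 9) : ℚ :=
  kAlpha i 0 * kAlpha j 1 - kAlpha i 1 * kAlpha j 0

/-- The Laplace-expansion normal `α_{abc} = Δ_{bc}e_a* − Δ_{ac}e_b* + Δ_{ab}e_c*`
of `D_{abc}`, as a vector in `ℚ⁹`. -/
def kForm (a b c : Fin 9) : Fin 9 → ℚ :=
  kDelta b c • (Pi.single a 1 : Fin 9 → ℚ)
    - kDelta a c • (Pi.single b 1 : Fin 9 → ℚ)
    + kDelta a b • (Pi.single c 1 : Fin 9 → ℚ)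

/-- The six normals for `T₀ = {123, 456, 789, 147, 258, 369}` (0-based indices). -/
def kForms : Fin 6 → (Fin 9 → ℚ) :=
  ![kForm 0 1 2, kForm 3 4 5, kForm 6 7 8, kForm 0 3 6, kForm 1 4 7, kForm 2 5 8]

/-- A vector `w ∈ ℚ⁹` as a linear functional `t ↦ Σ_i w i * t i` on `ℚ⁹`. -/
noncomputable def kFunctional (w : Fin 9 → ℚ) : (Fin 9 → ℚ) →ₗ[ℚ] ℚ :=
  ∑ i, w i • LinearMap.proj i

lemma kDelta_eq (i j : Fin 9) : kDelta i j = (i : ℚ) - j := by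
  simp [kDelta, kAlpha]

lemma kForm_apply (a b c j : Fin 9) : kForm a b c j =
    (if j = a then ((b:ℚ) - c) else 0) - (if j = b then ((a:ℚ) - c) else 0)
      + (if j = c then ((a:ℚ) - b) else 0) := by
  simp [kForm, Pi.single_apply, kDelta_eq, mul_ite]

lemma kc1 : ((1:Fin 9):ℚ) = 1 := rfl
lemma kc2 : ((2:Fin 9):ℚ) = 2 := rfl
lemma kc3 : ((3:Fin 9):ℚ) = 3 := rfl
lemma kc4 : ((4:Fin 9):ℚ) = 4 := rfl
lemma kc5 : ((5:Fin 9):ℚ) = 5 := rfl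
lemma kc6 : ((6:Fin 9):ℚ) = 6 := rfl
lemma kc7 : ((7:Fin 9):ℚ) = 7 := rfl
lemma kc8 : ((8:Fin 9):ℚ) = 8 := rfl

lemma kForms_5 : kForms 5 = kForm 2 5 8 := rfl

/-- The first five of the six forms. -/
def kV : Fin 5 → (Fin 9 → ℚ) :=
  ![kForm 0 1 2, kForm 3 4 5, kForm 6 7 8, kForm 0 3 6, kForm 1 4 7]

lemma kV_indep : LinearIndependent ℚ kV := by
  rw [Fintype.linearIndependent_iff]
  intro g h
  have h2 := congrFun h 2
  have h5 := congrFun h 5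
  have h8 := congrFun h 8
  have h3 := congrFun h 3
  have h4 := congrFun h 4
  simp (config := { decide := true })
    [Fin.sum_univ_five, kV, kForm_apply, Finset.sum_apply, Pi.smul_apply,
      Matrix.vecHead, Matrix.vecTail, kc1, kc2, kc3, kc4, kc5, kc6, kc7, kc8] at h2 h5 h8 h3 h4
  norm_num at h5 h8 h3 h4
  intro i
  fin_cases i
  · exact h2
  · exact h5
  · exact h8
  · show g 3 = 0; linarith
  · show g 4 = 0; linarith

lemma kForms_five : kForms 5 =
    (3:ℚ) • kV 0 - (6:ℚ) • kV 1 + (3:ℚ) • kV 2 - kV 3 + (2:ℚ) • kV 4 := by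
  funext j
  fin_cases j <;>
    simp (config := { decide := true }) [kForms_5, kV, kForm_apply,
      Matrix.vecHead, Matrix.vecTail, kc1, kc2, kc3, kc4, kc5, kc6, kc7, kc8] <;> norm_num

lemma span_eq :
    Submodule.span ℚ (Set.range kForms) = Submodule.span ℚ (Set.range kV) := by
  apply le_antisymm
  · rw [Submodule.span_le]
    rintro _ ⟨m, rfl⟩
    fin_cases m
    · exact Submodule.subset_span ⟨0, rfl⟩
    · exact Submodule.subset_span ⟨1, rfl⟩
    · exact Submodule.subset_span ⟨2, rfl⟩
    · exact Submodule.subset_span ⟨3, rfl⟩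
    · exact Submodule.subset_span ⟨4, rfl⟩
    · show kForms 5 ∈ _
      rw [kForms_five]
      have h : ∀ i : Fin 5, kV i ∈ Submodule.span ℚ (Set.range kV) :=
        fun i => Submodule.subset_span ⟨i, rfl⟩
      exact Submodule.add_mem _
        (Submodule.sub_mem _
          (Submodule.add_mem _
            (Submodule.sub_mem _ (Submodule.smul_mem _ _ (h 0)) (Submodule.smul_mem _ _ (h 1)))
            (Submodule.smul_mem _ _ (h 2)))
          (h 3))
        (Submodule.smul_mem _ _ (h 4))
  · rw [Submodule.span_le]
    rintro _ ⟨m, rfl⟩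
    fin_cases m
    · exact Submodule.subset_span ⟨0, rfl⟩
    · exact Submodule.subset_span ⟨1, rfl⟩
    · exact Submodule.subset_span ⟨2, rfl⟩
    · exact Submodule.subset_span ⟨3, rfl⟩
    · exact Submodule.subset_span ⟨4, rfl⟩

lemma span_finrank : Module.finrank ℚ ↥(Submodule.span ℚ (Set.range kForms)) = 5 := by
  rw [span_eq, finrank_span_eq_card kV_indep]
  simp

/-- `kFunctional` as a linear map. -/
noncomputable def kKF : (Fin 9 → ℚ) →ₗ[ℚ] Module.Dual ℚ (Fin 9 → ℚ) where
  toFun := kFunctional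
  map_add' w w' := by
    simp [kFunctional, add_smul, Finset.sum_add_distrib]
  map_smul' a w := by
    simp [kFunctional, Finset.smul_sum, smul_smul]

lemma kKF_apply (w : Fin 9 → ℚ) : kKF w = kFunctional w := rfl

lemma kKF_inj : Function.Injective kKF := by
  rw [← LinearMap.ker_eq_bot, LinearMap.ker_eq_bot']
  intro w hw
  funext j
  have := congrArg (fun f => f (Pi.single j 1)) hw
  simpa [kKF_apply, kFunctional, Pi.single_apply, mul_comm] using this


/-- K₃,₃-type configuration: with `α_i = (i−5,1)` for `i = 1,…,9` and
`T₀ = {123, 456, 789, 147, 258, 369}`, the six normals `α_S` of the hyperplanes `D_S`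
(`S ∈ T₀`) span a subspace of `(ℚ⁹)*` of dimension exactly 5, and hence
`rank ⋂_{S∈T₀} D_S = 5 < 6 = ν(T₀)`. -/
theorem k33_configuration_rank :
    Module.finrank ℚ ↥(Submodule.span ℚ (Set.range kForms)) = 5 ∧
    9 - Module.finrank ℚ ↥(⨅ m : Fin 6, LinearMap.ker (kFunctional (kForms m))) = 5 ∧
    (5 : ℕ) < 6 := by
  refine ⟨span_finrank, ?_, by norm_num⟩
  have hker : (⨅ m : Fin 6, LinearMap.ker (kFunctional (kForms m)))
      = (Submodule.span ℚ (Set.range (fun m => kKF (kForms m)))).dualCoannihilator := by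
    ext x
    rw [← SetLike.mem_coe (p := Submodule.dualCoannihilator _),
      Submodule.coe_dualCoannihilator_span]
    simp [Submodule.mem_iInf, LinearMap.mem_ker, kKF_apply]
  have hspan : Submodule.span ℚ (Set.range (fun m => kKF (kForms m)))
      = Submodule.map kKF (Submodule.span ℚ (Set.range kForms)) := by
    rw [Submodule.map_span, ← Set.range_comp]; rfl
  have hfr : Module.finrank ℚ ↥(Submodule.span ℚ (Set.range (fun m => kKF (kForms m)))) = 5 := by
    rw [hspan, ← LinearEquiv.finrank_eq
      (Submodule.equivMapOfInjective kKF kKF_inj (Submodule.span ℚ (Set.range kForms)))]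
    exact span_finrank
  have := Subspace.finrank_add_finrank_dualCoannihilator_eq
    (Submodule.span ℚ (Set.range (fun m => kKF (kForms m))))
  rw [hfr] at this
  rw [hker]
  have h9 : Module.finrank ℚ (Fin 9 → ℚ) = 9 := Module.finrank_fin_fun ℚ
  omega
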